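/- arXiv:1906.09979 — 2 statements merged into one kernel-verified Lean document; each statement's English description precedes it below -/
import Mathlib

section
/- Let (A,[·,·,·]) and (A′,[·,·,·]′) be 3-Lie algebras over a field F, and let ρ : A × A → End(A′) and χ : A′ × A′ → End(A) be bilinear skew-symmetric maps such that every ρ(x,y) is a derivation of A′, every χ(a,b) is a derivation of A, (A′,ρ) is a representation of A, (A,χ) is a representation of A′, and for all x1,x2,x3 ∈ A and a1,a2,a3 ∈ A′ the following four compatibility identities hold: (1) ad_{x1,x2}(χ(a1,a2)x3) − χ(a1,a2)(ad_{x1,x2}x3) = χ(ρ(x1,x2)a1, a2)x3 + χ(a1, ρ(x1,x2)a2)x3; (2) ad′_{a1,a2}(ρ(x1,x2)a3) − ρ(x1,x2)(ad′_{a1,a2}a3) = ρ(χ(a1,a2)x1, x2)a3 + ρ(x1, χ(a1,a2)x2)a3; (3) ad_{x1,x2}(χ(a1,a2)x3) = χ(ρ(x1,x2)a1, a2)x3 − χ(a1, ρ(x3,x1)a2)x2 − χ(a1, ρ(x2,x3)a2)x1; (4) ad′_{a1,a2}(ρ(x1,x2)a3) = ρ(χ(a1,a2)x1, x2)a3 −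 ρ(x1, χ(a3,a1)x2)a2 − ρ(x1, χ(a2,a3)x2)a1, where ad_{x,y}z = [x,y,z] and ad′_{a,b}c = [a,b,c]′. Then A ⊕ A′ is a 3-Lie algebra under the bracket [x1+a1, x2+a2, x3+a3] = [x1,x2,x3] + χ(a1,a2)x3 + χ(a3,a1)x2 + χ(a2,a3)x1 + [a1,a2,a3]′ + ρ(x1,x2)a3 + ρ(x3,x1)a2 + ρ(x2,x3)a1. -/
section Defs

variable {F : Type*} [Field F] {A : Type*} [AddCommGroup A] [Module F A]
variable {B : Type*} [AddCommGroup B] [Module F B]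

/-- Total skew-symmetry of a trilinear bracket. -/
def IsAlt (br : A →ₗ[F] A →ₗ[F] A →ₗ[F] A) : Prop :=
  (∀ x z, br x x z = 0) ∧ (∀ x y, br x y y = 0) ∧ (∀ x y, br x y x = 0)

/-- The Filippov (fundamental) identity. -/
def Filippov (br : A →ₗ[F] A →ₗ[F] A →ₗ[F] A) : Prop :=
  ∀ x1 x2 x3 x4 x5,
    br x1 x2 (br x3 x4 x5) =
      br (br x1 x2 x3) x4 x5 + br x3 (br x1 x2 x4) x5 + br x3 x4 (br x1 x2 x5)

/-- A 3-Lie algebra structure. -/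
def Is3Lie (br : A →ₗ[F] A →ₗ[F] A →ₗ[F] A) : Prop := IsAlt br ∧ Filippov br

/-- `(B, ρ)` is a representation of the 3-Lie algebra `(A, br)`. -/
def IsRep (br : A →ₗ[F] A →ₗ[F] A →ₗ[F] A)
    (ρ : A →ₗ[F] A →ₗ[F] B →ₗ[F] B) : Prop :=
  (∀ x1 x2 x3 x4,
    ρ x1 x2 ∘ₗ ρ x3 x4 - ρ x3 x4 ∘ₗ ρ x1 x2 =
      ρ (br x1 x2 x3) x4 + ρ x3 (br x1 x2 x4)) ∧
  (∀ x1 x2 x3 x4,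
    ρ (br x1 x2 x3) x4 =
      ρ x1 x2 ∘ₗ ρ x3 x4 + ρ x2 x3 ∘ₗ ρ x1 x4 + ρ x3 x1 ∘ₗ ρ x2 x4)

/-- Trilinearity of an unbundled ternary operation. -/
def IsTrilinearP (F : Type*) {M : Type*} [Field F] [AddCommGroup M] [Module F M]
    (m : M → M → M → M) : Prop :=
  (∀ a b c d, m (a + b) c d = m a c d + m b c d) ∧
  (∀ (s : F) a c d, m (s • a) c d = s • m a c d) ∧
  (∀ a b c d, m a (b + c) d = m a b d + m a c d) ∧
  (∀ (s : F) a b d, m a (s • b) d = s • m a b d) ∧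
  (∀ a b c d, m a b (c + d) = m a b c + m a b d) ∧
  (∀ (s : F) a b c, m a b (s • c) = s • m a b c)

/-- Total skew-symmetry of an unbundled ternary operation. -/
def IsAltP {M : Type*} [AddCommGroup M] (m : M → M → M → M) : Prop :=
  (∀ x z, m x x z = 0) ∧ (∀ x y, m x y y = 0) ∧ (∀ x y, m x y x = 0)

/-- Filippov identity for an unbundled ternary operation. -/
def FilippovP {M : Type*} [AddCommGroup M] (m : M → M → M → M) : Prop :=
  ∀ x1 x2 x3 x4 x5,
    m x1 x2 (m x3 x4 x5) =
      m (m x1 x2 x3) x4 x5 + m x3 (m x1 x2 x4) x5 + m x3 x4 (m x1 x2 x5)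

/-- Unbundled 3-Lie algebra structure. -/
def Is3LieP (F : Type*) {M : Type*} [Field F] [AddCommGroup M] [Module F M]
    (m : M → M → M → M) : Prop :=
  IsTrilinearP F m ∧ IsAltP m ∧ FilippovP m

/-- The bracket of a matched pair on `A ⊕ A'`:
`[x1+a1,x2+a2,x3+a3] = [x1,x2,x3] + χ(a1,a2)x3 + χ(a3,a1)x2 + χ(a2,a3)x1
  + [a1,a2,a3]' + ρ(x1,x2)a3 + ρ(x3,x1)a2 + ρ(x2,x3)a1`. -/
def mpBr (br : A →ₗ[F] A →ₗ[F] A →ₗ[F] A)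
    (br' : B →ₗ[F] B →ₗ[F] B →ₗ[F] B)
    (ρ : A →ₗ[F] A →ₗ[F] B →ₗ[F] B)
    (χ : B →ₗ[F] B →ₗ[F] A →ₗ[F] A) :
    A × B → A × B → A × B → A × B :=
  fun p q r =>
    (br p.1 q.1 r.1 + χ p.2 q.2 r.1 + χ r.2 p.2 q.1 + χ q.2 r.2 p.1,
     br' p.2 q.2 r.2 + ρ p.1 q.1 r.2 + ρ r.1 p.1 q.2 + ρ q.1 r.1 p.2)

end Defs


def pureE {A A' : Type*} [Zero A] [Zero A'] : A ⊕ A' → A × A' :=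
  Sum.elim (fun x => (x, (0 : A'))) (fun a => ((0 : A), a))

@[simp] theorem pureE_inl {A A' : Type*} [Zero A] [Zero A'] (x : A) :
    pureE (Sum.inl x) = ((x, 0) : A × A') := rfl

@[simp] theorem pureE_inr {A A' : Type*} [Zero A] [Zero A'] (a : A') :
    pureE (Sum.inr a) = ((0, a) : A × A') := rfl

set_option maxRecDepth 40000 in
/-- if `(A', ρ)` is a representation of `A` by derivations,
`(A, χ)` is a representation of `A'` by derivations, and the four
compatibility identities hold, then `A ⊕ A'` is a 3-Lie algebra under the
matched-pair bracket. -/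
theorem matched_pair_direct_sum_three_lie
    {F A A' : Type*} [Field F] [AddCommGroup A] [Module F A]
    [AddCommGroup A'] [Module F A']
    (br : A →ₗ[F] A →ₗ[F] A →ₗ[F] A) (h3 : Is3Lie br)
    (br' : A' →ₗ[F] A' →ₗ[F] A' →ₗ[F] A') (h3' : Is3Lie br')
    (ρ : A →ₗ[F] A →ₗ[F] A' →ₗ[F] A') (hρskew : ∀ x, ρ x x = 0)
    (χ : A' →ₗ[F] A' →ₗ[F] A →ₗ[F] A) (hχskew : ∀ a, χ a a = 0)
    (hρder : ∀ x y a b c,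
      ρ x y (br' a b c) = br' (ρ x y a) b c + br' a (ρ x y b) c + br' a b (ρ x y c))
    (hχder : ∀ a b x y z,
      χ a b (br x y z) = br (χ a b x) y z + br x (χ a b y) z + br x y (χ a b z))
    (hρrep : IsRep br ρ) (hχrep : IsRep br' χ)
    (h1 : ∀ x1 x2 x3 a1 a2,
      br x1 x2 (χ a1 a2 x3) - χ a1 a2 (br x1 x2 x3) =
        χ (ρ x1 x2 a1) a2 x3 + χ a1 (ρ x1 x2 a2) x3)
    (h2 : ∀ a1 a2 a3 x1 x2,
      br' a1 a2 (ρ x1 x2 a3) - ρ x1 x2 (br' a1 a2 a3) =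
        ρ (χ a1 a2 x1) x2 a3 + ρ x1 (χ a1 a2 x2) a3)
    (h3c : ∀ x1 x2 x3 a1 a2,
      br x1 x2 (χ a1 a2 x3) =
        χ (ρ x1 x2 a1) a2 x3 - χ a1 (ρ x3 x1 a2) x2 - χ a1 (ρ x2 x3 a2) x1)
    (h4 : ∀ a1 a2 a3 x1 x2,
      br' a1 a2 (ρ x1 x2 a3) =
        ρ (χ a1 a2 x1) x2 a3 - ρ x1 (χ a3 a1 x2) a2 - ρ x1 (χ a2 a3 x2) a1) :
    Is3LieP F (mpBr br br' ρ χ) := by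
  obtain ⟨⟨bA1, bA2, bA3⟩, bF⟩ := h3
  obtain ⟨⟨bA1', bA2', bA3'⟩, bF'⟩ := h3'
  -- element-level skew facts
  have hρ0 : ∀ x c, ρ x x c = 0 := fun x c => by rw [hρskew x]; rfl
  have hχ0 : ∀ a z, χ a a z = 0 := fun a z => by rw [hχskew a]; rfl
  have Eρ : ∀ x y c, ρ y x c = -ρ x y c := by
    intro x y c
    have h0 := LinearMap.congr_fun (hρskew (x + y)) c
    simp only [map_add, LinearMap.add_apply, hρ0, zero_add, add_zero,
      LinearMap.zero_apply] at h0
    linear_combination (norm := abel) h0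
  have Eχ : ∀ a b z, χ b a z = -χ a b z := by
    intro a b z
    have h0 := LinearMap.congr_fun (hχskew (a + b)) z
    simp only [map_add, LinearMap.add_apply, hχ0, zero_add, add_zero,
      LinearMap.zero_apply] at h0
    linear_combination (norm := abel) h0
  have EB12 : ∀ x y z, br y x z = -br x y z := by
    intro x y z
    have h0 := bA1 (x + y) z
    simp only [map_add, LinearMap.add_apply, bA1, zero_add, add_zero,
      LinearMap.zero_apply] at h0
    linear_combination (norm := abel) h0
  have EB23 : ∀ x y z, br x z y = -br x y z := by
    intro x y z
    have h0 := LinearMap.congr_fun (LinearMap.congr_fun (rfl : br x = br x) (y + z)) 0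
    have h1 := bA2 x (y + z)
    simp only [map_add, LinearMap.add_apply, bA2, zero_add, add_zero] at h1
    linear_combination (norm := abel) h1
  have EB12' : ∀ x y z, br' y x z = -br' x y z := by
    intro x y z
    have h1 := bA1' (x + y) z
    simp only [map_add, LinearMap.add_apply, bA1', zero_add, add_zero,
      LinearMap.zero_apply] at h1
    linear_combination (norm := abel) h1
  have EB23' : ∀ x y z, br' x z y = -br' x y z := by
    intro x y z
    have h1 := bA2' x (y + z)
    simp only [map_add, LinearMap.add_apply, bA2', zero_add, add_zero] at h1
    linear_combination (norm := abel) h1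
  -- element-level representation identities
  have hρr1 : ∀ x1 x2 x3 x4 c,
      ρ x1 x2 (ρ x3 x4 c) - ρ x3 x4 (ρ x1 x2 c) =
        ρ (br x1 x2 x3) x4 c + ρ x3 (br x1 x2 x4) c := by
    intro x1 x2 x3 x4 c
    have h0 := LinearMap.congr_fun (hρrep.1 x1 x2 x3 x4) c
    simpa using h0
  have hρr2 : ∀ x1 x2 x3 x4 c,
      ρ (br x1 x2 x3) x4 c =
        ρ x1 x2 (ρ x3 x4 c) + ρ x2 x3 (ρ x1 x4 c) + ρ x3 x1 (ρ x2 x4 c) := by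
    intro x1 x2 x3 x4 c
    have h0 := LinearMap.congr_fun (hρrep.2 x1 x2 x3 x4) c
    simpa using h0
  have hχr1 : ∀ a1 a2 a3 a4 z,
      χ a1 a2 (χ a3 a4 z) - χ a3 a4 (χ a1 a2 z) =
        χ (br' a1 a2 a3) a4 z + χ a3 (br' a1 a2 a4) z := by
    intro a1 a2 a3 a4 z
    have h0 := LinearMap.congr_fun (hχrep.1 a1 a2 a3 a4) z
    simpa using h0
  have hχr2 : ∀ a1 a2 a3 a4 z,
      χ (br' a1 a2 a3) a4 z =
        χ a1 a2 (χ a3 a4 z) + χ a2 a3 (χ a1 a4 z) + χ a3 a1 (χ a2 a4 z) := by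
    intro a1 a2 a3 a4 z
    have h0 := LinearMap.congr_fun (hχrep.2 a1 a2 a3 a4) z
    simpa using h0
  have EχR : ∀ (b : A') (x y : A) (c : A') (z : A),
      χ b (ρ y x c) z = -χ b (ρ x y c) z := by
    intro b x y c z; rw [Eρ x y c]; simp
  have EχLin : ∀ (x y : A) (c : A') (b : A') (z : A),
      χ (ρ y x c) b z = -χ (ρ x y c) b z := by
    intro x y c b z; rw [Eρ x y c]; simp
  have EχRin : ∀ (u v a b : A') (z : A),
      χ u v (χ b a z) = -χ u v (χ a b z) := by
    intro u v a b z; rw [Eχ a b z]; simp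
  have EρR : ∀ (y : A) (a b : A') (z : A) (c : A'),
      ρ y (χ b a z) c = -ρ y (χ a b z) c := by
    intro y a b z c; rw [Eχ a b z]; simp
  have EρL : ∀ (a b : A') (z x : A) (c : A'),
      ρ (χ b a z) x c = -ρ (χ a b z) x c := by
    intro a b z x c; rw [Eχ a b z]; simp
  have EρRin : ∀ (u v x y : A) (c : A'),
      ρ u v (ρ y x c) = -ρ u v (ρ x y c) := by
    intro u v x y c; rw [Eρ x y c]; simp
  have EBχ : ∀ (x y : A) (a b : A') (z : A),
      br x y (χ b a z) = -br x y (χ a b z) := by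
    intro x y a b z; rw [Eχ a b z]; simp
  have EB'ρ : ∀ (a b : A') (x y : A) (c : A'),
      br' a b (ρ y x c) = -br' a b (ρ x y c) := by
    intro a b x y c; rw [Eρ x y c]; simp
  set m := mpBr br br' ρ χ with hm
  -- additivity and homogeneity in each slot
  have madd1 : ∀ p p' q r, m (p + p') q r = m p q r + m p' q r := by
    intro p p' q r
    simp only [hm, mpBr, Prod.fst_add, Prod.snd_add, map_add,
      LinearMap.add_apply, Prod.mk_add_mk, Prod.ext_iff]
    exact ⟨by abel, by abel⟩
  have madd2 : ∀ p q q' r, m p (q + q') r = m p q r + m p q' r := by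
    intro p q q' r
    simp only [hm, mpBr, Prod.fst_add, Prod.snd_add, map_add,
      LinearMap.add_apply, Prod.mk_add_mk, Prod.ext_iff]
    exact ⟨by abel, by abel⟩
  have madd3 : ∀ p q r r', m p q (r + r') = m p q r + m p q r' := by
    intro p q r r'
    simp only [hm, mpBr, Prod.fst_add, Prod.snd_add, map_add,
      LinearMap.add_apply, Prod.mk_add_mk, Prod.ext_iff]
    exact ⟨by abel, by abel⟩
  have msmul1 : ∀ (s : F) p q r, m (s • p) q r = s • m p q r := by
    intro s p q r
    simp only [hm, mpBr, Prod.smul_fst, Prod.smul_snd, map_smul,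
      LinearMap.smul_apply, Prod.smul_mk, Prod.ext_iff, smul_add]
  have msmul2 : ∀ (s : F) p q r, m p (s • q) r = s • m p q r := by
    intro s p q r
    simp only [hm, mpBr, Prod.smul_fst, Prod.smul_snd, map_smul,
      LinearMap.smul_apply, Prod.smul_mk, Prod.ext_iff, smul_add]
  have msmul3 : ∀ (s : F) p q r, m p q (s • r) = s • m p q r := by
    intro s p q r
    simp only [hm, mpBr, Prod.smul_fst, Prod.smul_snd, map_smul,
      LinearMap.smul_apply, Prod.smul_mk, Prod.ext_iff, smul_add]
  refine ⟨⟨fun a b c d => madd1 a b c d, fun s a c d => msmul1 s a c d,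
      fun a b c d => madd2 a b c d, fun s a b d => msmul2 s a b d,
      fun a b c d => madd3 a b c d, fun s a b c => msmul3 s a b c⟩, ?alt, ?fil⟩
  case alt =>
    refine ⟨fun p r => ?_, fun p q => ?_, fun p q => ?_⟩
    · simp only [hm, mpBr, bA1, hρ0, hχ0, bA1', Prod.ext_iff,
        Prod.fst_zero, Prod.snd_zero]
      constructor
      · rw [Eχ p.2 r.2 p.1]; abel
      · rw [Eρ p.1 r.1 p.2]; abel
    · simp only [hm, mpBr, bA2, hρ0, hχ0, bA2', Prod.ext_iff,
        Prod.fst_zero, Prod.snd_zero]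
      constructor
      · rw [Eχ q.2 p.2 q.1]; abel
      · rw [Eρ q.1 p.1 q.2]; abel
    · simp only [hm, mpBr, bA3, hρ0, hχ0, bA3', Prod.ext_iff,
        Prod.fst_zero, Prod.snd_zero]
      constructor
      · rw [Eχ p.2 q.2 p.1]; abel
      · rw [Eρ p.1 q.1 p.2]; abel
  case fil =>
  -- evaluation on pure elements
  have mP1 : ∀ x y z : A, m (x, (0:A')) (y, 0) (z, 0) = (br x y z, 0) := by
    intro x y z; simp [hm, mpBr]
  have mP2 : ∀ (x y : A) (c : A'), m (x, 0) (y, 0) (0, c) = (0, ρ x y c) := by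
    intro x y c; simp [hm, mpBr]
  have mP3 : ∀ (x z : A) (b : A'), m (x, 0) (0, b) (z, 0) = (0, ρ z x b) := by
    intro x z b; simp [hm, mpBr]
  have mP4 : ∀ (y z : A) (a : A'), m (0, a) (y, 0) (z, 0) = (0, ρ y z a) := by
    intro y z a; simp [hm, mpBr]
  have mP5 : ∀ (x : A) (b c : A'), m (x, 0) (0, b) (0, c) = (χ b c x, 0) := by
    intro x b c; simp [hm, mpBr]
  have mP6 : ∀ (y : A) (a c : A'), m (0, a) (y, 0) (0, c) = (χ c a y, 0) := by
    intro y a c; simp [hm, mpBr]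
  have mP7 : ∀ (z : A) (a b : A'), m (0, a) (0, b) (z, 0) = (χ a b z, 0) := by
    intro z a b; simp [hm, mpBr]
  have mP8 : ∀ a b c : A', m (0, a) (0, b) (0, c) = ((0:A), br' a b c) := by
    intro a b c; simp [hm, mpBr]
  have key : ∀ u1 u2 u3 u4 u5 : A ⊕ A',
      m (pureE u1) (pureE u2) (m (pureE u3) (pureE u4) (pureE u5)) =
        m (m (pureE u1) (pureE u2) (pureE u3)) (pureE u4) (pureE u5) +
        m (pureE u3) (m (pureE u1) (pureE u2) (pureE u4)) (pureE u5) +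
        m (pureE u3) (pureE u4) (m (pureE u1) (pureE u2) (pureE u5)) := by
    rintro (x1 | a1) (x2 | a2) (x3 | a3) (x4 | a4) (x5 | a5) <;>
      simp only [pureE_inl, pureE_inr, mP1, mP2, mP3, mP4, mP5, mP6, mP7, mP8,
        Prod.mk_add_mk, Prod.mk.injEq, add_zero, zero_add, and_true, true_and,
        eq_self_iff_true]
    · exact bF x1 x2 x3 x4 x5
    · linear_combination (norm := abel) hρr1 x1 x2 x3 x4 a5
    · linear_combination (norm := abel) hρr1 x1 x2 x5 x3 a4
    · linear_combination (norm := abel) h1 x1 x2 x3 a4 a5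
    · linear_combination (norm := abel) hρr1 x1 x2 x4 x5 a3
    · linear_combination (norm := abel) h1 x1 x2 x4 a5 a3
    · linear_combination (norm := abel) h1 x1 x2 x5 a3 a4
    · exact hρder x1 x2 a3 a4 a5
    · linear_combination (norm := abel) hρr2 x3 x4 x5 x1 a2
    · linear_combination (norm := abel) h3c x3 x4 x1 a5 a2 +
        Eχ a2 (ρ x3 x4 a5) x1 - EχR a5 x3 x1 a2 x4 -
        Eχ a5 (ρ x4 x1 a2) x3 - EBχ x3 x4 a5 a2 x1
    · linear_combination (norm := abel) -h3c x3 x5 x1 a4 a2 -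
        Eχ a2 (ρ x3 x5 a4) x1 + EχR a2 x5 x3 a4 x1 -
        Eχ a4 (ρ x3 x1 a2) x5 + EχR a4 x1 x3 a2 x5 -
        EB23 x3 x5 (χ a2 a4 x1) + EBχ x3 x5 a4 a2 x1
    · linear_combination (norm := abel) -h4 a4 a5 a2 x3 x1 -
        EB12' a4 (ρ x3 x1 a2) a5 + EB23' a4 a5 (ρ x3 x1 a2) -
        Eρ x3 (χ a2 a5 x1) a4 + EρR x3 a2 a5 x1 a4
    · linear_combination (norm := abel) h3c x4 x5 x1 a3 a2 +
        Eχ a2 (ρ x4 x5 a3) x1 - EB12 x4 (χ a2 a3 x1) x5 +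
        EB23 x4 x5 (χ a2 a3 x1) - EBχ x4 x5 a3 a2 x1 -
        EχR a3 x1 x4 a2 x5 - Eχ a3 (ρ x5 x1 a2) x4
    · linear_combination (norm := abel) h4 a3 a5 a2 x4 x1 +
        EρL a3 a5 x4 x1 a2 - Eρ x4 (χ a2 a3 x1) a5 -
        EB23' a3 a5 (ρ x4 x1 a2) - EρR x4 a2 a5 x1 a3
    · linear_combination (norm := abel) -h4 a3 a4 a2 x5 x1 -
        Eρ x5 (χ a2 a4 x1) a3 + EρR x5 a2 a4 x1 a3
    · linear_combination (norm := abel) -hχr2 a3 a4 a5 a2 x1 +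
        Eχ a2 (br' a3 a4 a5) x1 - EχRin a3 a4 a2 a5 x1 -
        EχRin a4 a5 a2 a3 x1 - EχRin a5 a3 a2 a4 x1
    · linear_combination (norm := abel) -hρr2 x3 x4 x5 x2 a1 +
        Eρ x2 (br x3 x4 x5) a1 - EρRin x3 x4 x2 x5 a1 -
        EρRin x4 x5 x2 x3 a1 - EρRin x5 x3 x2 x4 a1
    · linear_combination (norm := abel) -h3c x3 x4 x2 a5 a1 -
        Eχ a5 (ρ x2 x4 a1) x3 + EχR a5 x2 x4 a1 x3
    · linear_combination (norm := abel) h3c x3 x5 x2 a4 a1 +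
        EχLin x3 x5 a4 a1 x2 - Eχ a4 (ρ x2 x3 a1) x5 -
        EB23 x3 x5 (χ a4 a1 x2) - EχR a4 x5 x2 a1 x3
    · linear_combination (norm := abel) h4 a4 a5 a1 x3 x2 +
        Eρ x2 (χ a4 a5 x3) a1 - EB12' a4 (ρ x2 x3 a1) a5 +
        EB23' a4 a5 (ρ x2 x3 a1) - EB'ρ a4 a5 x2 x3 a1 -
        EρR x3 a1 a4 x2 a5 - Eρ x3 (χ a5 a1 x2) a4
    · linear_combination (norm := abel) -h3c x4 x5 x2 a3 a1 -
        EB12 x4 (χ a3 a1 x2) x5 + EB23 x4 x5 (χ a3 a1 x2) -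
        Eχ a3 (ρ x2 x5 a1) x4 + EχR a3 x2 x5 a1 x4
    · linear_combination (norm := abel) -h4 a3 a5 a1 x4 x2 -
        Eρ x2 (χ a3 a5 x4) a1 + EρR x2 a3 a5 x4 a1 -
        Eρ x4 (χ a3 a1 x2) a5 + EρR x4 a1 a3 x2 a5 -
        EB23' a3 a5 (ρ x2 x4 a1) + EB'ρ a3 a5 x2 x4 a1
    · linear_combination (norm := abel) h4 a3 a4 a1 x5 x2 +
        Eρ x2 (χ a3 a4 x5) a1 - EρR x5 a1 a3 x2 a4 -
        Eρ x5 (χ a4 a1 x2) a3 - EB'ρ a3 a4 x2 x5 a1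
    · linear_combination (norm := abel) hχr2 a3 a4 a5 a1 x2
    · exact hχder a1 a2 x3 x4 x5
    · linear_combination (norm := abel) h2 a1 a2 a5 x3 x4
    · linear_combination (norm := abel) h2 a1 a2 a4 x5 x3
    · linear_combination (norm := abel) hχr1 a1 a2 a4 a5 x3
    · linear_combination (norm := abel) h2 a1 a2 a3 x4 x5
    · linear_combination (norm := abel) hχr1 a1 a2 a5 a3 x4
    · linear_combination (norm := abel) hχr1 a1 a2 a3 a4 x5
    · exact bF' a1 a2 a3 a4 a5
  -- reduction of the general case to pure elements
  have hsplit : ∀ p : A × A', ∃ u v : A ⊕ A', p = pureE u + pureE v := by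
    rintro ⟨x, a⟩
    exact ⟨Sum.inl x, Sum.inr a, by simp [Prod.ext_iff]⟩
  have L5 : ∀ (u1 u2 u3 u4 : A ⊕ A') (p5 : A × A'),
      m (pureE u1) (pureE u2) (m (pureE u3) (pureE u4) p5) =
        m (m (pureE u1) (pureE u2) (pureE u3)) (pureE u4) p5 +
        m (pureE u3) (m (pureE u1) (pureE u2) (pureE u4)) p5 +
        m (pureE u3) (pureE u4) (m (pureE u1) (pureE u2) p5) := by
    intro u1 u2 u3 u4 p5
    obtain ⟨u, v, rfl⟩ := hsplit p5
    simp only [madd1, madd2, madd3]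
    rw [key u1 u2 u3 u4 u, key u1 u2 u3 u4 v]
    abel
  have L4 : ∀ (u1 u2 u3 : A ⊕ A') (p4 p5 : A × A'),
      m (pureE u1) (pureE u2) (m (pureE u3) p4 p5) =
        m (m (pureE u1) (pureE u2) (pureE u3)) p4 p5 +
        m (pureE u3) (m (pureE u1) (pureE u2) p4) p5 +
        m (pureE u3) p4 (m (pureE u1) (pureE u2) p5) := by
    intro u1 u2 u3 p4 p5
    obtain ⟨u, v, rfl⟩ := hsplit p4
    simp only [madd1, madd2, madd3]
    rw [L5 u1 u2 u3 u p5, L5 u1 u2 u3 v p5]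
    abel
  have L3 : ∀ (u1 u2 : A ⊕ A') (p3 p4 p5 : A × A'),
      m (pureE u1) (pureE u2) (m p3 p4 p5) =
        m (m (pureE u1) (pureE u2) p3) p4 p5 +
        m p3 (m (pureE u1) (pureE u2) p4) p5 +
        m p3 p4 (m (pureE u1) (pureE u2) p5) := by
    intro u1 u2 p3 p4 p5
    obtain ⟨u, v, rfl⟩ := hsplit p3
    simp only [madd1, madd2, madd3]
    rw [L4 u1 u2 u p4 p5, L4 u1 u2 v p4 p5]
    abel
  have L2 : ∀ (u1 : A ⊕ A') (p2 p3 p4 p5 : A × A'),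
      m (pureE u1) p2 (m p3 p4 p5) =
        m (m (pureE u1) p2 p3) p4 p5 +
        m p3 (m (pureE u1) p2 p4) p5 +
        m p3 p4 (m (pureE u1) p2 p5) := by
    intro u1 p2 p3 p4 p5
    obtain ⟨u, v, rfl⟩ := hsplit p2
    simp only [madd1, madd2, madd3]
    rw [L3 u1 u p3 p4 p5, L3 u1 v p3 p4 p5]
    abel
  intro p1 p2 p3 p4 p5
  obtain ⟨u, v, rfl⟩ := hsplit p1
  simp only [madd1, madd2, madd3]
  rw [L2 u p2 p3 p4 p5, L2 v p2 p3 p4 p5]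
  abel
end

section
/- Let A be a finite-dimensional vector space over a field F carrying a 3-Lie algebra structure [·,·,·], and let [·,·,·]_* be a 3-Lie algebra structure on the dual space A*. Define ad* : A × A → End(A*) by (ad*_{x,y}ξ)(z) = −ξ([x,y,z]), and define aφ* : A* × A* → End(A) by the requirement ζ(aφ*_{α,β} x) = −([α,β,ζ]_*)(x) for all ζ ∈ A*. Equip A ⊕ A* with the trilinear bracket [x1+ξ1, x2+ξ2, x3+ξ3] = [x1,x2,x3] + ad*_{x1,x2}ξ3 + ad*_{x3,x1}ξ2 + ad*_{x2,x3}ξ1 + aφ*_{ξ1,ξ2}x3 + aφ*_{ξ3,ξ1}x2 + aφ*_{ξ2,ξ3}x1 + [ξ1,ξ2,ξ3]_*, and with the symmetric bilinear form (x+ξ, y+η) = η(x) + ξ(y). Then the form is invariant: ([u,v,w], z) + (w, [u,v,z]) = 0 for all u,v,w,z ∈ A ⊕ A*; moreover A and A* are isotropic, i.e., (x,y) = 0 for x,y ∈ A and (ξ,η) = 0 for ξ,η ∈ A*. -/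
section Defs

variable {F : Type*} [Field F] {A : Type*} [AddCommGroup A] [Module F A]

/-- The coadjoint action: `(coad br x y ξ) z = -ξ [x,y,z]`. -/
def coad (br : A →ₗ[F] A →ₗ[F] A →ₗ[F] A) (x y : A) :
    Module.Dual F A →ₗ[F] Module.Dual F A :=
  - (br x y).dualMap

/-- The bracket on `A ⊕ A*` built from the bracket `br` on `A`, the bracket
`brs` on `A*`, the coadjoint action of `A` on `A*`, and the coadjoint action
`aφ` of `A*` on `A`. -/
def dblBr (br : A →ₗ[F] A →ₗ[F] A →ₗ[F] A)
    (brs : Module.Dual F A →ₗ[F] Module.Dual F A →ₗ[F]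
      Module.Dual F A →ₗ[F] Module.Dual F A)
    (aφ : Module.Dual F A → Module.Dual F A → A → A) :
    A × Module.Dual F A → A × Module.Dual F A → A × Module.Dual F A →
      A × Module.Dual F A :=
  fun p q r =>
    (br p.1 q.1 r.1 + aφ p.2 q.2 r.1 + aφ r.2 p.2 q.1 + aφ q.2 r.2 p.1,
     brs p.2 q.2 r.2 + coad br p.1 q.1 r.2 + coad br r.1 p.1 q.2 +
       coad br q.1 r.1 p.2)

/-- The natural symmetric pairing `(x+ξ, y+η) = η(x) + ξ(y)` on `A ⊕ A*`. -/
def dblForm : A × Module.Dual F A → A × Module.Dual F A → F :=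
  fun p q => q.2 p.1 + p.2 q.1

end Defs



section Aux
variable {F : Type*} [Field F] {M : Type*} [AddCommGroup M] [Module F M]

lemma alt13 {br : M →ₗ[F] M →ₗ[F] M →ₗ[F] M} (h : IsAlt br) (x y z : M) :
    br x y z = - br z y x := by
  have := h.2.2 (x + z) y
  simp only [map_add, LinearMap.add_apply] at this
  rw [h.2.2 x y, h.2.2 z y, zero_add, add_zero] at this
  exact eq_neg_of_add_eq_zero_right this

lemma alt23 {br : M →ₗ[F] M →ₗ[F] M →ₗ[F] M} (h : IsAlt br) (x y z : M) :
    br x y z = - br x z y := by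
  have := h.2.1 x (y + z)
  simp only [map_add, LinearMap.add_apply] at this
  rw [h.2.1 x y, h.2.1 x z, zero_add, add_zero] at this
  exact eq_neg_of_add_eq_zero_right this

end Aux

/-- the natural pairing on `A ⊕ A*` is invariant for the bracket
built from `br`, `brs` and the two coadjoint actions, and `A`, `A*` are
isotropic. -/
theorem double_bracket_form_invariant
    {F A : Type*} [Field F] [AddCommGroup A] [Module F A] [FiniteDimensional F A]
    (br : A →ₗ[F] A →ₗ[F] A →ₗ[F] A) (h3 : Is3Lie br)
    (brs : Module.Dual F A →ₗ[F] Module.Dual F A →ₗ[F]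
      Module.Dual F A →ₗ[F] Module.Dual F A) (h3s : Is3Lie brs)
    (aφ : Module.Dual F A → Module.Dual F A → A → A)
    (haφ : ∀ α β x (ζ : Module.Dual F A), ζ (aφ α β x) = -(brs α β ζ x)) :
    (∀ u v w z,
      dblForm (dblBr br brs aφ u v w) z + dblForm w (dblBr br brs aφ u v z) = 0) ∧
    (∀ x y : A, dblForm (x, (0 : Module.Dual F A)) (y, 0) = 0) ∧
    (∀ ξ η : Module.Dual F A, dblForm ((0 : A), ξ) ((0 : A), η) = 0) := by
  refine ⟨fun u v w z => ?_, fun x y => by simp [dblForm], fun ξ η => by simp [dblForm]⟩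
  simp only [dblBr, dblForm, coad, LinearMap.neg_apply, LinearMap.dualMap_apply, map_add,
    LinearMap.add_apply, haφ, LinearMap.neg_apply]
  have h1 : v.2 (br w.1 u.1 z.1) = - v.2 (br z.1 u.1 w.1) := by
    rw [alt13 h3.1]; simp
  have h2 : u.2 (br v.1 w.1 z.1) = - u.2 (br v.1 z.1 w.1) := by
    rw [alt23 h3.1]; simp
  have h3' : brs w.2 u.2 z.2 v.1 = - brs z.2 u.2 w.2 v.1 := by
    rw [alt13 h3s.1]; simp
  have h4 : brs v.2 w.2 z.2 u.1 = - brs v.2 z.2 w.2 u.1 := by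
    rw [alt23 h3s.1]; simp
  linear_combination (-1 : F) * (h1 + h2 + h3' + h4)
end
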